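/- Let f, g ∈ ℤ[x] with gcd(f,g)=1 (including content), deg f ≤ D, deg g ≤ D, ‖f‖_∞ ≤ C, ‖g‖_∞ ≤ C. Set H = (D+1)^D C^{2D} and let β ≥ 2CH(H−1)+1 be an integer with g(β) ≠ 0. Write f(β)/g(β) = a/b in lowest terms with μ = gcd(f(β), g(β)) > 0. Then the polynomials f/μ and g/μ have coefficients in the finite set A = {s/t : s,t ∈ ℤ, 0 < t ≤ H, |s/t| ≤ C}, and any two distinct elements of A differ by at least 1/(H(H−1)). -/

import Mathlib

open Polynomial

section helpers
open Matrix Finset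

private lemma amgm_pow {k : ℕ} (hk : k ≠ 0) (z : Fin k → ℝ) (hz : ∀ i, 0 ≤ z i)
    {R : ℝ} (hR : 0 ≤ R) (hsum : ∑ i, z i ≤ k * R) : ∏ i, z i ≤ R ^ k := by
  have hk' : (0:ℝ) < k := by positivity
  have h := Real.geom_mean_le_arith_mean_weighted Finset.univ (fun _ => (k:ℝ)⁻¹) z
    (fun i _ => by positivity) (by simp [Finset.sum_const]; field_simp) (fun i _ => hz i)
  have h2 : ∑ i, (k:ℝ)⁻¹ * z i ≤ R := by
    rw [← Finset.mul_sum]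
    rw [inv_mul_le_iff₀ hk']
    linarith [hsum]
  have h3 : ∏ i, z i ^ ((k:ℝ)⁻¹) ≤ R := le_trans h h2
  have h4 : (∏ i, z i ^ ((k:ℝ)⁻¹)) ^ k ≤ R ^ k := by
    apply pow_le_pow_left₀ (Finset.prod_nonneg (fun i _ => Real.rpow_nonneg (hz i) _)) h3
  calc ∏ i, z i = (∏ i, z i ^ ((k:ℝ)⁻¹)) ^ k := by
        rw [← Finset.prod_pow]
        refine Finset.prod_congr rfl (fun i _ => ?_)
        rw [← Real.rpow_natCast (z i ^ ((k:ℝ)⁻¹)) k, ← Real.rpow_mul (hz i),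
          inv_mul_cancel₀ (by positivity), Real.rpow_one]
    _ ≤ R ^ k := h4

private lemma trace_eq_sum_eig {k : ℕ} {G : Matrix (Fin k) (Fin k) ℝ} (hG : G.IsHermitian) :
    G.trace = ∑ i, hG.eigenvalues i := by
  simpa using hG.trace_eq_sum_eigenvalues

private lemma det_sq_le {k : ℕ} (M : Matrix (Fin k) (Fin k) ℝ) {R : ℝ} (hR : 0 ≤ R)
    (hrow : ∀ i, ∑ j, (M i j)^2 ≤ R) : (M.det)^2 ≤ R ^ k := by
  rcases Nat.eq_zero_or_pos k with rfl | hk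
  · simp [Matrix.det_fin_zero]
  have hPSD : (M * Mᴴ).PosSemidef := Matrix.posSemidef_self_mul_conjTranspose M
  have hherm := hPSD.1
  have hdiag : ∀ i, (M * Mᴴ) i i ≤ R := by
    intro i
    have : (M * Mᴴ) i i = ∑ j, (M i j)^2 := by
      simp [Matrix.mul_apply, Matrix.conjTranspose_apply, pow_two]
    rw [this]; exact hrow i
  have htr : ∑ i, hherm.eigenvalues i ≤ k * R := by
    rw [← trace_eq_sum_eig hherm]
    unfold Matrix.trace
    calc ∑ i, (M * Mᴴ).diag i ≤ ∑ _i : Fin k, R := Finset.sum_le_sum (fun i _ => hdiag i)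
      _ = k * R := by simp [Finset.sum_const, nsmul_eq_mul]
  have hdet : (M * Mᴴ).det = ∏ i, hherm.eigenvalues i := by
    have := hherm.det_eq_prod_eigenvalues
    simpa using this
  have : (M * Mᴴ).det ≤ R ^ k :=
    hdet ▸ amgm_pow hk.ne' _ (fun i => hPSD.eigenvalues_nonneg i) hR htr
  calc (M.det)^2 = (M * Mᴴ).det := by
        rw [Matrix.det_mul, Matrix.det_conjTranspose, star_trivial, pow_two]
    _ ≤ R ^ k := this


private lemma coeff_sum_C_X (a : ℕ → ℤ) (m t : ℕ) :
    (∑ i ∈ range m, Polynomial.C (a i) * X ^ i).coeff t = if t < m then a t else 0 := by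
  rw [Polynomial.finset_sum_coeff]
  simp only [Polynomial.coeff_C_mul, Polynomial.coeff_X_pow, mul_ite, mul_one, mul_zero]
  rw [Finset.sum_ite_eq (range m) t a]
  simp [Finset.mem_range]

private lemma row_sq_bound (p : Polynomial ℤ) (C : ℤ) (hpC : ∀ t, |p.coeff t| ≤ C)
    (D : ℕ) (hpD : p.natDegree ≤ D) (N a : ℕ) :
    ∑ j : Fin N, (if a ≤ (j : ℕ) then p.coeff ((j : ℕ) - a) else 0) ^ 2 ≤ ((D : ℤ) + 1) * C ^ 2 := by
  have h1 := Fin.sum_univ_eq_sum_range (fun t => (if a ≤ t then p.coeff (t - a) else 0) ^ 2) N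
  set F : ℕ → ℤ := fun t => (if a ≤ t then p.coeff (t - a) else 0) ^ 2 with hF
  have h2 : ∑ t ∈ range N, F t ≤ ∑ t ∈ range (a + (D + 1 + N)), F t :=
    Finset.sum_le_sum_of_subset_of_nonneg (Finset.range_subset_range.mpr (by omega))
      (fun t _ _ => sq_nonneg _)
  have h3 : ∑ t ∈ range (a + (D + 1 + N)), F t = ∑ s ∈ range (D + 1 + N), F (a + s) := by
    rw [Finset.range_eq_Ico, ← Finset.sum_Ico_consecutive _ (Nat.zero_le a) (by omega : a ≤ a + (D + 1 + N))]
    have h0 : ∑ t ∈ Finset.Ico 0 a, F t = 0 := by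
      apply Finset.sum_eq_zero
      intro t ht
      simp only [Finset.mem_Ico] at ht
      simp [hF, if_neg (by omega : ¬ a ≤ t)]
    rw [h0, zero_add, Finset.sum_Ico_eq_sum_range]
    have ha : a + (D + 1 + N) - a = D + 1 + N := by omega
    rw [ha]
  have h4 : ∀ s, F (a + s) = (p.coeff s) ^ 2 := by
    intro s
    simp [hF, if_pos (Nat.le_add_right a s), Nat.add_sub_cancel_left]
  have h5 : ∑ s ∈ range (D + 1 + N), F (a + s) = ∑ s ∈ range (D + 1), (p.coeff s) ^ 2 := by
    rw [← Finset.sum_subset (Finset.range_subset_range.mpr (by omega : D + 1 ≤ D + 1 + N))]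
    · exact Finset.sum_congr rfl (fun s _ => h4 s)
    · intro s _ hs
      rw [h4 s]
      have : p.natDegree < s := by simp only [Finset.mem_range] at hs; omega
      rw [Polynomial.coeff_eq_zero_of_natDegree_lt this]
      ring
  have h6 : ∑ s ∈ range (D + 1), (p.coeff s) ^ 2 ≤ ((D : ℤ) + 1) * C ^ 2 := by
    calc ∑ s ∈ range (D + 1), (p.coeff s) ^ 2 ≤ ∑ _s ∈ range (D + 1), C ^ 2 := by
          apply Finset.sum_le_sum
          intro s _
          have := abs_le.mp (hpC s)
          exact sq_le_sq' (this.1) (this.2)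
      _ = ((D : ℤ) + 1) * C ^ 2 := by
          rw [Finset.sum_const, Finset.card_range, nsmul_eq_mul]
          push_cast
          ring
  rw [h3, h5] at h2
  exact le_of_eq_of_le h1 (le_trans h2 h6)

private lemma sylvester_bound (f g : Polynomial ℤ) (hcop : IsRelPrime f g)
    (hf : f ≠ 0) (hg : g ≠ 0) (D : ℕ) (C : ℤ)
    (hdf : f.natDegree ≤ D) (hdg : g.natDegree ≤ D)
    (hfC : ∀ i, |f.coeff i| ≤ C) (hgC : ∀ i, |g.coeff i| ≤ C)
    (hN : 0 < f.natDegree + g.natDegree) :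
    ∃ u v : Polynomial ℤ, ∃ r : ℤ, r ≠ 0 ∧ u * f + v * g = Polynomial.C r ∧
      r ^ 2 ≤ (((D : ℤ) + 1) * C ^ 2) ^ (f.natDegree + g.natDegree) := by
  set n := f.natDegree with hn
  set m := g.natDegree with hm
  set N := n + m with hNdef
  set S : Matrix (Fin N) (Fin N) ℤ := fun i j =>
    if (i : ℕ) < m then (if (i : ℕ) ≤ (j : ℕ) then f.coeff ((j : ℕ) - (i : ℕ)) else 0)
    else (if (i : ℕ) - m ≤ (j : ℕ) then g.coeff ((j : ℕ) - ((i : ℕ) - m)) else 0) with hS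
  set w' : (Fin N → ℤ) → ℕ → ℤ := fun w i => if h : i < N then w ⟨i, h⟩ else 0 with hw'
  set U : (Fin N → ℤ) → Polynomial ℤ :=
    fun w => ∑ i ∈ range m, Polynomial.C (w' w i) * X ^ i with hU
  set V : (Fin N → ℤ) → Polynomial ℤ :=
    fun w => ∑ i ∈ range n, Polynomial.C (w' w (m + i)) * X ^ i with hV
  -- coefficient formulas
  have hUf : ∀ (w : Fin N → ℤ) (t : ℕ), (U w * f).coeff t
      = ∑ i ∈ range m, w' w i * (if i ≤ t then f.coeff (t - i) else 0) := by
    intro w t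
    rw [hU]
    rw [Finset.sum_mul, Polynomial.finset_sum_coeff]
    refine Finset.sum_congr rfl (fun i _ => ?_)
    have : Polynomial.C (w' w i) * X ^ i * f = Polynomial.C (w' w i) * (f * X ^ i) := by ring
    rw [this, Polynomial.coeff_C_mul, Polynomial.coeff_mul_X_pow']
  have hVg : ∀ (w : Fin N → ℤ) (t : ℕ), (V w * g).coeff t
      = ∑ i ∈ range n, w' w (m + i) * (if i ≤ t then g.coeff (t - i) else 0) := by
    intro w t
    rw [hV]
    rw [Finset.sum_mul, Polynomial.finset_sum_coeff]
    refine Finset.sum_congr rfl (fun i _ => ?_)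
    have : Polynomial.C (w' w (m + i)) * X ^ i * g = Polynomial.C (w' w (m + i)) * (g * X ^ i) := by
      ring
    rw [this, Polynomial.coeff_C_mul, Polynomial.coeff_mul_X_pow']
  -- vecMul formula
  have hP : ∀ (w : Fin N → ℤ) (j : Fin N),
      Matrix.vecMul w S j = (U w * f + V w * g).coeff (j : ℕ) := by
    intro w j
    rw [Polynomial.coeff_add, hUf, hVg]
    have e1 : Matrix.vecMul w S j = ∑ i : Fin N, w i * S i j := by
      simp [Matrix.vecMul, dotProduct]
    rw [e1]
    set G : ℕ → ℤ := fun i => w' w i * (if i < m then (if i ≤ (j : ℕ) then f.coeff ((j : ℕ) - i) else 0)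
        else (if i - m ≤ (j : ℕ) then g.coeff ((j : ℕ) - (i - m)) else 0)) with hG
    have e2 : ∀ i : Fin N, w i * S i j = G (i : ℕ) := by
      intro i
      simp only [hG, hw', hS]
      rw [dif_pos i.isLt]
    have e3 : ∑ i : Fin N, w i * S i j = ∑ i ∈ range N, G i := by
      rw [Finset.sum_congr rfl (fun i _ => e2 i)]
      exact Fin.sum_univ_eq_sum_range G N
    have e4 : ∑ i ∈ range N, G i = ∑ i ∈ Finset.Ico 0 m, G i + ∑ i ∈ Finset.Ico m N, G i := by
      rw [Finset.range_eq_Ico, ← Finset.sum_Ico_consecutive _ (Nat.zero_le m) (by omega : m ≤ N)]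
    have e5 : ∑ i ∈ Finset.Ico 0 m, G i
        = ∑ i ∈ range m, w' w i * (if i ≤ (j : ℕ) then f.coeff ((j : ℕ) - i) else 0) := by
      rw [← Finset.range_eq_Ico]
      refine Finset.sum_congr rfl (fun i hi => ?_)
      rw [Finset.mem_range] at hi
      rw [hG]
      simp only [if_pos hi]
    have e6 : ∑ i ∈ Finset.Ico m N, G i
        = ∑ i ∈ range n, w' w (m + i) * (if i ≤ (j : ℕ) then g.coeff ((j : ℕ) - i) else 0) := by
      rw [Finset.sum_Ico_eq_sum_range]
      have hNm : N - m = n := by omega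
      rw [hNm]
      refine Finset.sum_congr rfl (fun i _ => ?_)
      rw [hG]
      have h1 : ¬ (m + i < m) := by omega
      have h2 : m + i - m = i := by omega
      simp only [if_neg h1, h2]
    rw [e3, e4, e5, e6]
  -- high coefficients vanish
  have hHigh : ∀ (w : Fin N → ℤ) (t : ℕ), N ≤ t → (U w * f + V w * g).coeff t = 0 := by
    intro w t ht
    rw [Polynomial.coeff_add, hUf, hVg]
    have z1 : ∀ i ∈ range m, w' w i * (if i ≤ t then f.coeff (t - i) else 0) = 0 := by
      intro i hi
      rw [Finset.mem_range] at hi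
      rw [if_pos (by omega : i ≤ t), Polynomial.coeff_eq_zero_of_natDegree_lt
        (by omega : f.natDegree < t - i), mul_zero]
    have z2 : ∀ i ∈ range n, w' w (m + i) * (if i ≤ t then g.coeff (t - i) else 0) = 0 := by
      intro i hi
      rw [Finset.mem_range] at hi
      rw [if_pos (by omega : i ≤ t), Polynomial.coeff_eq_zero_of_natDegree_lt
        (by omega : g.natDegree < t - i), mul_zero]
    rw [Finset.sum_eq_zero z1, Finset.sum_eq_zero z2, add_zero]
  -- determinant nonzero
  have hdet : S.det ≠ 0 := by
    intro hdet0
    obtain ⟨w, hw0, hwS⟩ := (Matrix.exists_vecMul_eq_zero_iff).mpr hdet0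
    have hP0 : U w * f + V w * g = 0 := by
      apply Polynomial.ext
      intro t
      rw [Polynomial.coeff_zero]
      by_cases ht : t < N
      · rw [← (by rfl : ((⟨t, ht⟩ : Fin N) : ℕ) = t), ← hP w ⟨t, ht⟩, hwS]
        rfl
      · exact hHigh w t (by omega)
    have hgUf : g ∣ U w * f := ⟨-(V w), by linear_combination hP0⟩
    have hgU : g ∣ U w := (hcop.symm).dvd_of_dvd_mul_right hgUf
    have hU0 : U w = 0 := by
      by_contra hU0
      have hm0 : 0 < m := by
        rcases Nat.eq_zero_or_pos m with h | h
        · exact absurd (by simp [hU, h]) hU0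
        · exact h
      have h1 : m ≤ (U w).natDegree := hm ▸ Polynomial.natDegree_le_of_dvd hgU hU0
      have h2 : (U w).natDegree ≤ m - 1 := by
        rw [hU]
        apply Polynomial.natDegree_sum_le_of_forall_le
        intro i hi
        rw [Finset.mem_range] at hi
        exact le_trans (Polynomial.natDegree_C_mul_X_pow_le _ _) (by omega)
      omega
    have hV0 : V w = 0 := by
      have : V w * g = 0 := by rw [hU0, zero_mul, zero_add] at hP0; exact hP0
      exact (mul_eq_zero.mp this).resolve_right hg
    apply hw0
    funext i
    have hwi : w i = w' w (i : ℕ) := by rw [hw']; simp [dif_pos i.isLt]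
    by_cases him : (i : ℕ) < m
    · have h1 : (U w).coeff (i : ℕ) = if (i : ℕ) < m then w' w (i : ℕ) else 0 :=
        coeff_sum_C_X (fun t => w' w t) m (i : ℕ)
      rw [hU0] at h1
      simp only [Polynomial.coeff_zero, if_pos him] at h1
      show w i = 0
      rw [hwi, ← h1]
    · have hlt : (i : ℕ) - m < n := by have := i.isLt; omega
      have h1 : (V w).coeff ((i : ℕ) - m) = if (i : ℕ) - m < n then w' w (m + ((i : ℕ) - m)) else 0 :=
        coeff_sum_C_X (fun t => w' w (m + t)) n ((i : ℕ) - m)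
      rw [hV0] at h1
      simp only [Polynomial.coeff_zero, if_pos hlt] at h1
      have he : m + ((i : ℕ) - m) = (i : ℕ) := by omega
      rw [he] at h1
      show w i = 0
      rw [hwi, ← h1]
  -- the Cramer combination
  have hN0 : 0 < N := hN
  set i0 : Fin N := ⟨0, hN0⟩ with hi0
  set w₀ : Fin N → ℤ := fun i => S.adjugate i0 i with hw₀
  have hvm : ∀ j : Fin N, Matrix.vecMul w₀ S j = S.det * (if i0 = j then 1 else 0) := by
    intro j
    calc Matrix.vecMul w₀ S j = ∑ i : Fin N, S.adjugate i0 i * S i j := by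
          simp [Matrix.vecMul, dotProduct, hw₀]
      _ = (S.adjugate * S) i0 j := (Matrix.mul_apply).symm
      _ = (S.det • (1 : Matrix (Fin N) (Fin N) ℤ)) i0 j := by rw [Matrix.adjugate_mul]
      _ = S.det * (if i0 = j then 1 else 0) := by
          simp [Matrix.smul_apply, Matrix.one_apply]
  have hPC : U w₀ * f + V w₀ * g = Polynomial.C S.det := by
    apply Polynomial.ext
    intro t
    rw [Polynomial.coeff_C]
    by_cases ht : t < N
    · rw [← (by rfl : ((⟨t, ht⟩ : Fin N) : ℕ) = t), ← hP w₀ ⟨t, ht⟩, hvm]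
      have : (i0 = (⟨t, ht⟩ : Fin N)) ↔ (t = 0) := by
        rw [hi0, Fin.mk.injEq]; omega
      by_cases h0 : t = 0
      · rw [if_pos (this.mpr h0), if_pos h0, mul_one]
      · rw [if_neg (fun hh => h0 (this.mp hh)), if_neg h0, mul_zero]
    · rw [hHigh w₀ t (by omega), if_neg (by omega : ¬ t = 0)]
  -- Hadamard bound
  have hrowZ : ∀ i : Fin N, ∑ j : Fin N, (S i j) ^ 2 ≤ ((D : ℤ) + 1) * C ^ 2 := by
    intro i
    by_cases him : (i : ℕ) < m
    · have : ∀ j : Fin N, (S i j) ^ 2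
          = (if (i : ℕ) ≤ (j : ℕ) then f.coeff ((j : ℕ) - (i : ℕ)) else 0) ^ 2 := by
        intro j; rw [hS]; simp only [if_pos him]
      rw [Finset.sum_congr rfl (fun j _ => this j)]
      exact row_sq_bound f C hfC D hdf N (i : ℕ)
    · have : ∀ j : Fin N, (S i j) ^ 2
          = (if (i : ℕ) - m ≤ (j : ℕ) then g.coeff ((j : ℕ) - ((i : ℕ) - m)) else 0) ^ 2 := by
        intro j; rw [hS]; simp only [if_neg him]
      rw [Finset.sum_congr rfl (fun j _ => this j)]
      exact row_sq_bound g C hgC D hdg N ((i : ℕ) - m)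
  have hreal : ((S.det : ℤ) : ℝ) ^ 2 ≤ (((D : ℝ) + 1) * (C : ℝ) ^ 2) ^ N := by
    have hdetmap : ((S.det : ℤ) : ℝ) = (S.map (Int.cast : ℤ → ℝ)).det :=
      RingHom.map_det (Int.castRingHom ℝ) S
    rw [hdetmap]
    apply det_sq_le
    · positivity
    · intro i
      have : ∑ j : Fin N, ((S.map (Int.cast : ℤ → ℝ)) i j) ^ 2
          = ((∑ j : Fin N, (S i j) ^ 2 : ℤ) : ℝ) := by
        push_cast [Matrix.map_apply]
        rfl
      rw [this]
      have := hrowZ i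
      have hcast : ((∑ j : Fin N, (S i j) ^ 2 : ℤ) : ℝ) ≤ (((D : ℤ) + 1) * C ^ 2 : ℤ) := by
        exact_mod_cast this
      refine le_trans hcast (le_of_eq ?_)
      push_cast
      ring
  refine ⟨U w₀, V w₀, S.det, hdet, hPC, ?_⟩
  have : ((S.det ^ 2 : ℤ) : ℝ) ≤ (((((D : ℤ) + 1) * C ^ 2) ^ N : ℤ) : ℝ) := by
    push_cast
    convert hreal using 2
    exact (RingHom.map_det (Int.castRingHom ℝ) S).symm
  exact_mod_cast this

end helpers

theorem stmt18 (f g : Polynomial ℤ) (D : ℕ) (C β : ℤ) (hC1 : 1 ≤ C)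
    (hcop : IsRelPrime f g)
    (hdf : f.natDegree ≤ D) (hdg : g.natDegree ≤ D)
    (hfC : ∀ i, |f.coeff i| ≤ C) (hgC : ∀ i, |g.coeff i| ≤ C)
    (H : ℤ) (hH : H = (D + 1) ^ D * C ^ (2 * D))
    (hβ : β ≥ 2 * C * H * (H - 1) + 1)
    (hgβ : g.eval β ≠ 0)
    (μ : ℤ) (hμ : μ = Int.gcd (f.eval β) (g.eval β))
    (A : Set ℚ) (hA : A = {q : ℚ | ∃ s u : ℤ, 0 < u ∧ u ≤ H ∧
      |(s : ℚ) / (u : ℚ)| ≤ (C : ℚ) ∧ q = (s : ℚ) / (u : ℚ)}) :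
    (∀ i, ((f.coeff i : ℚ) / (μ : ℚ)) ∈ A) ∧
    (∀ i, ((g.coeff i : ℚ) / (μ : ℚ)) ∈ A) ∧
    (∀ q₁ ∈ A, ∀ q₂ ∈ A, q₁ ≠ q₂ →
      (1 : ℚ) / ((H : ℚ) * ((H : ℚ) - 1)) ≤ |q₁ - q₂|) := by
  have hH1 : (1 : ℤ) ≤ H := by
    rw [hH]
    have h1 : (1 : ℤ) ≤ ((D : ℤ) + 1) ^ D := one_le_pow₀ (by omega : (1 : ℤ) ≤ (D : ℤ) + 1)
    have h2 : (1 : ℤ) ≤ C ^ (2 * D) := one_le_pow₀ hC1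
    nlinarith
  have hμ1 : (1 : ℤ) ≤ μ := by
    have : 0 < Int.gcd (f.eval β) (g.eval β) := Int.gcd_pos_iff.mpr (Or.inr hgβ)
    rw [hμ]
    exact_mod_cast this
  have hμH : μ ≤ H := by
    by_cases hf0 : f = 0
    · have hgu : IsUnit g := hcop (show g ∣ f by rw [hf0]; exact dvd_zero g) dvd_rfl
      obtain ⟨r, hr, hrg⟩ := Polynomial.isUnit_iff.mp hgu
      have hev : g.eval β = r := by rw [← hrg, Polynomial.eval_C]
      have hr1 : r = 1 ∨ r = -1 := Int.isUnit_iff.mp hr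
      have hμval : μ = 1 := by
        rw [hμ, hf0, Polynomial.eval_zero, hev]
        rcases hr1 with h | h <;> simp [h, Int.gcd]
      omega
    · have hg0 : g ≠ 0 := fun h => hgβ (by rw [h]; simp)
      by_cases hdeg : 0 < f.natDegree + g.natDegree
      · obtain ⟨u, v, r, hr0, hidr, hrbd⟩ :=
          sylvester_bound f g hcop hf0 hg0 D C hdf hdg hfC hgC hdeg
        have heval : (u.eval β) * (f.eval β) + (v.eval β) * (g.eval β) = r := by
          have := congrArg (Polynomial.eval β) hidr
          simpa using this
        have hdvd : μ ∣ r := by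
          rw [hμ, ← heval]
          exact dvd_add (Dvd.dvd.mul_left (Int.gcd_dvd_left _ _) _)
            (Dvd.dvd.mul_left (Int.gcd_dvd_right _ _) _)
        have hμler : μ ≤ |r| := Int.le_of_dvd (abs_pos.mpr hr0) ((dvd_abs _ _).mpr hdvd)
        have habs : |r| ≤ H := by
          apply abs_le_of_sq_le_sq ?_ (by omega : (0 : ℤ) ≤ H)
          calc r ^ 2 ≤ (((D : ℤ) + 1) * C ^ 2) ^ (f.natDegree + g.natDegree) := hrbd
            _ ≤ (((D : ℤ) + 1) * C ^ 2) ^ (2 * D) := by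
                apply pow_le_pow_right₀ (by nlinarith) (by omega)
            _ = H ^ 2 := by
                rw [hH, mul_pow, mul_pow, ← pow_mul, ← pow_mul, ← pow_mul]
                push_cast
                ring_nf
        omega
      · push_neg at hdeg
        have hfn : f.natDegree = 0 := by omega
        have hgn : g.natDegree = 0 := by omega
        obtain ⟨a, ha⟩ := Polynomial.natDegree_eq_zero.mp hfn
        obtain ⟨b, hb⟩ := Polynomial.natDegree_eq_zero.mp hgn
        have hd : IsUnit (Polynomial.C ((Int.gcd a b : ℤ))) := hcop
          (by rw [← ha]; exact map_dvd Polynomial.C (Int.gcd_dvd_left _ _))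
          (by rw [← hb]; exact map_dvd Polynomial.C (Int.gcd_dvd_right _ _))
        have hu := Int.isUnit_iff.mp (Polynomial.isUnit_C.mp hd)
        have hgcd : (Int.gcd a b : ℤ) = 1 := by
          rcases hu with h | h
          · exact h
          · have : (0 : ℤ) ≤ (Int.gcd a b : ℤ) := Int.natCast_nonneg _
            omega
        have hμval : μ = 1 := by
          rw [hμ, ← ha, ← hb, Polynomial.eval_C, Polynomial.eval_C]
          exact hgcd
        omega
  have hCnn : (0 : ℚ) ≤ (C : ℚ) := by exact_mod_cast le_trans zero_le_one hC1
  have hmem : ∀ s : ℤ, |s| ≤ C → ((s : ℚ) / (μ : ℚ)) ∈ A := by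
    intro s hs
    rw [hA]
    refine ⟨s, μ, by omega, hμH, ?_, rfl⟩
    rw [abs_div]
    have h1 : |(s : ℚ)| ≤ (C : ℚ) := by exact_mod_cast hs
    have h2 : |(μ : ℚ)| = (μ : ℚ) := abs_of_pos (by exact_mod_cast hμ1.trans_lt' zero_lt_one)
    rw [h2]
    calc |(s : ℚ)| / (μ : ℚ) ≤ |(s : ℚ)| :=
          div_le_self (abs_nonneg _) (by exact_mod_cast hμ1)
      _ ≤ (C : ℚ) := h1
  refine ⟨fun i => hmem _ (hfC i), fun i => hmem _ (hgC i), ?_⟩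
  intro q₁ hq₁ q₂ hq₂ hne
  rw [hA] at hq₁ hq₂
  obtain ⟨s₁, u₁, hu₁0, hu₁H, -, rfl⟩ := hq₁
  obtain ⟨s₂, u₂, hu₂0, hu₂H, -, rfl⟩ := hq₂
  by_cases hH2 : H = 1
  · have hz : ((H : ℚ)) * ((H : ℚ) - 1) = 0 := by
      rw [hH2]; push_cast; ring
    rw [hz, div_zero]
    exact abs_nonneg _
  · have hH2' : (2 : ℤ) ≤ H := by omega
    have hu₁Q : (0 : ℚ) < (u₁ : ℚ) := by exact_mod_cast hu₁0
    have hu₂Q : (0 : ℚ) < (u₂ : ℚ) := by exact_mod_cast hu₂0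
    have hnum : s₁ * u₂ - s₂ * u₁ ≠ 0 := by
      intro h
      apply hne
      rw [div_eq_div_iff hu₁Q.ne' hu₂Q.ne']
      have he : s₁ * u₂ = s₂ * u₁ := by omega
      exact_mod_cast he
    have hnum1 : (1 : ℚ) ≤ |(s₁ : ℚ) * u₂ - (s₂ : ℚ) * u₁| := by
      have h1 : (1 : ℤ) ≤ |s₁ * u₂ - s₂ * u₁| := Int.one_le_abs hnum
      calc (1 : ℚ) = ((1 : ℤ) : ℚ) := by norm_num
        _ ≤ ((|s₁ * u₂ - s₂ * u₁| : ℤ) : ℚ) := by exact_mod_cast h1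
        _ = |(s₁ : ℚ) * u₂ - (s₂ : ℚ) * u₁| := by push_cast; ring_nf
    have hdiff : (s₁ : ℚ) / u₁ - (s₂ : ℚ) / u₂
        = ((s₁ : ℚ) * u₂ - (s₂ : ℚ) * u₁) / ((u₁ : ℚ) * u₂) := by
      field_simp
    rw [hdiff, abs_div, abs_of_pos (by positivity : (0 : ℚ) < (u₁ : ℚ) * u₂)]
    have hHQ : (0 : ℚ) < (H : ℚ) * ((H : ℚ) - 1) := by
      have h1 : (1 : ℚ) < (H : ℚ) := by exact_mod_cast hH2'.trans_lt' one_lt_two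
      nlinarith
    by_cases hueq : u₁ = u₂
    · subst hueq
      have hs12 : s₁ ≠ s₂ := by
        intro h
        apply hnum
        rw [h]; ring
      have hnumu : (u₁ : ℚ) ≤ |(s₁ : ℚ) * u₁ - (s₂ : ℚ) * u₁| := by
        have h1 : (1 : ℤ) ≤ |s₁ - s₂| := Int.one_le_abs (by omega)
        have h2 : |(s₁ : ℚ) * u₁ - (s₂ : ℚ) * u₁| = |(s₁ : ℚ) - s₂| * u₁ := by
          rw [← sub_mul, abs_mul, abs_of_pos hu₁Q]
        rw [h2]
        have h3 : (1 : ℚ) ≤ |(s₁ : ℚ) - s₂| := by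
          calc (1 : ℚ) = ((1 : ℤ) : ℚ) := by norm_num
            _ ≤ ((|s₁ - s₂| : ℤ) : ℚ) := by exact_mod_cast h1
            _ = |(s₁ : ℚ) - s₂| := by push_cast; ring_nf
        nlinarith
      have hu1H : (u₁ : ℚ) ≤ (H : ℚ) * ((H : ℚ) - 1) := by
        have : u₁ ≤ H * (H - 1) := by nlinarith
        exact_mod_cast this
      calc (1 : ℚ) / ((H : ℚ) * ((H : ℚ) - 1)) ≤ 1 / (u₁ : ℚ) := by
            apply one_div_le_one_div_of_le hu₁Q hu1H
        _ = (u₁ : ℚ) / ((u₁ : ℚ) * u₁) := by field_simp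
        _ ≤ |(s₁ : ℚ) * u₁ - (s₂ : ℚ) * u₁| / ((u₁ : ℚ) * u₁) :=
            div_le_div₀ (abs_nonneg _) hnumu (by positivity) le_rfl
    · have huu : u₁ * u₂ ≤ H * (H - 1) := by
        rcases lt_or_gt_of_ne hueq with h | h
        · nlinarith
        · nlinarith
      have huuQ : (u₁ : ℚ) * u₂ ≤ (H : ℚ) * ((H : ℚ) - 1) := by
        calc (u₁ : ℚ) * u₂ = ((u₁ * u₂ : ℤ) : ℚ) := by push_cast; ring
          _ ≤ ((H * (H - 1) : ℤ) : ℚ) := by exact_mod_cast huu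
          _ = (H : ℚ) * ((H : ℚ) - 1) := by push_cast; ring
      exact div_le_div₀ (abs_nonneg _) hnum1 (by positivity) huuQ
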